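/- arXiv:2306.06839 — 2 statements merged into one kernel-verified Lean document; each statement's English description precedes it below -/
import Mathlib

section
/- A Laplacian matrix L (zero row sums, nonnegative off-diagonal entries) satisfies λ_max((L + Lᵀ)/2) = 0 if and only if all column sums of L are zero. -/
open Matrix BigOperators

lemma quad_nonpos_of_eigs {n : ℕ} {A : Matrix (Fin n) (Fin n) ℝ}
    (hA : A.IsHermitian) (h : ∀ i, hA.eigenvalues i ≤ 0) (x : Fin n → ℝ) :
    x ⬝ᵥ A *ᵥ x ≤ 0 := by
  set U : Matrix (Fin n) (Fin n) ℝ := (hA.eigenvectorUnitary : Matrix (Fin n) (Fin n) ℝ)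
  set y : Fin n → ℝ := Uᵀ *ᵥ x with hy
  have key : x ⬝ᵥ A *ᵥ x = ∑ i, hA.eigenvalues i * (y i * y i) := by
    conv_lhs => rw [hA.spectral_theorem, Unitary.conjStarAlgAut_apply]
    rw [← mulVec_mulVec, ← mulVec_mulVec, dotProduct_mulVec x]
    rw [star_eq_conjTranspose, conjTranspose_eq_transpose_of_trivial, ← mulVec_transpose, ← hy]
    simp [dotProduct, mulVec_diagonal, mul_comm, mul_assoc, mul_left_comm]
  rw [key]
  apply Finset.sum_nonpos
  intro i _
  exact mul_nonpos_of_nonpos_of_nonneg (h i) (mul_self_nonneg _)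

lemma quad_nonpos_of_sums {n : ℕ} {M : Matrix (Fin n) (Fin n) ℝ}
    (hoff : ∀ i j, i ≠ j → 0 ≤ M i j) (hrow : ∀ i, ∑ j, M i j = 0)
    (hcol : ∀ j, ∑ i, M i j = 0) (x : Fin n → ℝ) : x ⬝ᵥ M *ᵥ x ≤ 0 := by
  have h1 : ∑ i, ∑ j, M i j * x i ^ 2 = 0 := by
    refine Finset.sum_eq_zero fun i _ => ?_
    rw [← Finset.sum_mul, hrow, zero_mul]
  have h2 : ∑ i, ∑ j, M i j * x j ^ 2 = 0 := by
    rw [Finset.sum_comm]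
    refine Finset.sum_eq_zero fun j _ => ?_
    rw [← Finset.sum_mul, hcol, zero_mul]
  have hdot : x ⬝ᵥ M *ᵥ x = ∑ i, ∑ j, x i * (M i j * x j) := by
    simp [dotProduct, mulVec, Finset.mul_sum]
  have expand : ∑ i, ∑ j, M i j * (x i - x j) ^ 2 = -(2 * (x ⬝ᵥ M *ᵥ x)) := by
    have e : ∀ i j, M i j * (x i - x j) ^ 2
        = M i j * x i ^ 2 + M i j * x j ^ 2 - 2 * (x i * (M i j * x j)) := by
      intro i j; ring
    calc ∑ i, ∑ j, M i j * (x i - x j) ^ 2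
        = ∑ i, ∑ j, (M i j * x i ^ 2 + M i j * x j ^ 2 - 2 * (x i * (M i j * x j))) := by
          simp_rw [e]
      _ = (∑ i, ∑ j, M i j * x i ^ 2) + (∑ i, ∑ j, M i j * x j ^ 2)
            - 2 * ∑ i, ∑ j, x i * (M i j * x j) := by
          simp only [Finset.sum_sub_distrib, Finset.sum_add_distrib, Finset.mul_sum]
      _ = -(2 * (x ⬝ᵥ M *ᵥ x)) := by rw [h1, h2, hdot]; ring
  have hnn : 0 ≤ ∑ i, ∑ j, M i j * (x i - x j) ^ 2 := by
    refine Finset.sum_nonneg fun i _ => Finset.sum_nonneg fun j _ => ?_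
    rcases eq_or_ne i j with rfl | hij
    · simp
    · exact mul_nonneg (hoff i j hij) (sq_nonneg _)
  rw [expand] at hnn
  linarith

/-- A Laplacian matrix `L` (zero row sums, nonnegative off-diagonal entries, nonpositive
diagonal) satisfies `λ_max((L + Lᵀ)/2) = 0` iff all column sums of `L` are zero. -/
theorem reactivity_zero_iff_column_sums_zero {n : ℕ} (hn : 0 < n)
    (L : Matrix (Fin n) (Fin n) ℝ)
    (hdiag : ∀ i, L i i ≤ 0)
    (hoff : ∀ i j, i ≠ j → 0 ≤ L i j)
    (hrow : ∀ i, ∑ j, L i j = 0)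
    (hS : ((1 / 2 : ℝ) • (L + Lᵀ)).IsHermitian) :
    (⨆ i, hS.eigenvalues i) = 0 ↔ ∀ j, ∑ i, L i j = 0 := by
  have hne : Nonempty (Fin n) := ⟨⟨0, hn⟩⟩
  set S : Matrix (Fin n) (Fin n) ℝ := (1 / 2 : ℝ) • (L + Lᵀ) with hSdef
  have hbdd : BddAbove (Set.range fun i => hS.eigenvalues i) :=
    (Set.finite_range _).bddAbove
  have hSrow : ∀ i, ∑ j, S i j = (1 / 2) * (∑ j, L i j + ∑ j, L j i) := by
    intro i
    simp [hSdef, Finset.mul_sum, Finset.sum_add_distrib, mul_add]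
  constructor
  · intro hsup j
    have hle : ∀ i, hS.eigenvalues i ≤ 0 := fun i => hsup ▸ le_ciSup hbdd i
    have hquad := quad_nonpos_of_eigs hS hle
    have hpsd : (-S).PosSemidef := by
      refine .of_dotProduct_mulVec_nonneg hS.neg fun x => ?_
      have := hquad x
      simp only [neg_mulVec, dotProduct_neg, star_trivial]
      linarith
    have hone : star (fun _ => (1:ℝ)) ⬝ᵥ (-S) *ᵥ (fun _ => (1:ℝ)) = 0 := by
      simp only [star_trivial, neg_mulVec, dotProduct_neg, neg_eq_zero]
      have : (fun _ => (1:ℝ)) ⬝ᵥ S *ᵥ (fun _ => (1:ℝ)) = ∑ i, ∑ j, S i j := by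
        simp [dotProduct, mulVec, one_mul, mul_one]
      rw [this]
      have : ∑ i, ∑ j, S i j = (1/2) * ((∑ i, ∑ j, L i j) + ∑ i, ∑ j, L j i) := by
        simp_rw [hSrow]
        rw [← Finset.sum_add_distrib, Finset.mul_sum]
      rw [this, Finset.sum_comm (f := fun i j => L j i)]
      simp [hrow]
    have hker : (-S) *ᵥ (fun _ => (1:ℝ)) = 0 :=
      (hpsd.dotProduct_mulVec_zero_iff _).mp hone
    have hSone : ∀ i, ∑ k, S i k = 0 := by
      intro i
      have := congrFun hker i
      simp only [neg_mulVec, Pi.neg_apply, Pi.zero_apply, neg_eq_zero, mulVec, dotProduct,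
        mul_one, Matrix.neg_apply, Finset.sum_neg_distrib] at this
      linarith [this]
    have := hSrow j
    rw [hSone j, hrow j] at this
    have : ∑ i, L i j = 0 := by linarith [this]
    exact this
  · intro hcol
    have hSrow0 : ∀ i, ∑ j, S i j = 0 := by
      intro i; rw [hSrow i, hrow i, hcol i]; ring
    have hScol0 : ∀ j, ∑ i, S i j = 0 := by
      intro j
      have : ∀ i, S i j = S j i := by
        intro i; simp [hSdef]; ring
      simp_rw [this]
      exact hSrow0 j
    have hSoff : ∀ i j, i ≠ j → 0 ≤ S i j := by
      intro i j hij
      have := hoff i j hij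
      have := hoff j i (Ne.symm hij)
      simp [hSdef]
      linarith
    have hquad := quad_nonpos_of_sums hSoff hSrow0 hScol0
    have hle : ∀ i, hS.eigenvalues i ≤ 0 := by
      intro i
      rw [hS.eigenvalues_eq i]
      simpa using hquad _
    have hSone : S *ᵥ (fun _ => (1:ℝ)) = 0 := by
      ext i
      simpa [mulVec, dotProduct] using hSrow0 i
    have hdet : S.det = 0 :=
      exists_mulVec_eq_zero_iff.mp ⟨(fun _ => 1), fun h => by
        simpa using congrFun h ⟨0, hn⟩, hSone⟩
    have hzero : ∃ i, hS.eigenvalues i = 0 := by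
      have hmem : (0:ℝ) ∈ spectrum ℝ S := by
        rw [spectrum.zero_mem_iff]
        intro hu
        rw [Matrix.isUnit_iff_isUnit_det, hdet] at hu
        exact not_isUnit_zero hu
      rw [hS.spectrum_real_eq_range_eigenvalues] at hmem
      obtain ⟨i, hi⟩ := hmem
      exact ⟨i, hi⟩
    obtain ⟨i, hi⟩ := hzero
    exact le_antisymm (ciSup_le hle) (hi ▸ le_ciSup hbdd i)
end

section
/- A weighted digraph with Laplacian L can be reweighted (keeping exactly the same support with strictly positive weights on all existing edges) so that the new Laplacian L* has zero row and column sums if and only if the underlying directed graph is strongly connected, assuming it contains a directed spanning tree. -/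
open BigOperators

/-- A weighted digraph containing a directed spanning tree can be reweighted (strictly
positive weights exactly on its edges) so that the resulting Laplacian has zero row and
column sums (i.e., the graph is balanced, hence minimally reactive) iff the underlying
directed graph is strongly connected. -/
theorem reweighting_balanced_iff_strongly_connected
    {V : Type*} [Fintype V] (E : V → V → Prop)
    (htree : ∃ r : V, ∀ v, Relation.ReflTransGen E r v) :
    (∃ w : V → V → ℝ,
        (∀ i j, E i j → 0 < w i j) ∧
        (∀ i j, ¬ E i j → w i j = 0) ∧
        (∀ v, ∑ u, w u v = ∑ u, w v u)) ↔
      (∀ i j, Relation.ReflTransGen E i j) := by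
  classical
  obtain ⟨r, hr⟩ := htree
  constructor
  · rintro ⟨w, hpos, hzero, hbal⟩ i j
    have hw0 : ∀ a b, 0 ≤ w a b := by
      intro a b
      by_cases h : E a b
      · exact (hpos a b h).le
      · exact (hzero a b h).ge
    set S : Finset V := Finset.univ.filter (fun v => Relation.ReflTransGen E i v) with hS
    have hmemS : ∀ v, v ∈ S ↔ Relation.ReflTransGen E i v := by
      intro v; simp [hS]
    have hclosed : ∀ u v, u ∈ S → E u v → v ∈ S := by
      intro u v hu he
      exact (hmemS v).2 (((hmemS u).1 hu).tail he)
    have hcut : ∑ v ∈ S, ∑ u ∈ Sᶜ, w u v = 0 := by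
      have h1 : ∑ v ∈ S, ∑ u, w u v = ∑ v ∈ S, ∑ u, w v u :=
        Finset.sum_congr rfl fun v _ => hbal v
      have hsplit : ∀ f : V → V → ℝ, ∑ v ∈ S, ∑ u, f v u
          = ∑ v ∈ S, ∑ u ∈ S, f v u + ∑ v ∈ S, ∑ u ∈ Sᶜ, f v u := by
        intro f
        rw [← Finset.sum_add_distrib]
        refine Finset.sum_congr rfl fun v _ => ?_
        rw [Finset.sum_add_sum_compl S]
      have hA := hsplit (fun v u => w u v)
      have hB := hsplit w
      rw [hA, hB] at h1
      have hSS : ∑ v ∈ S, ∑ u ∈ S, w u v = ∑ v ∈ S, ∑ u ∈ S, w v u :=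
        Finset.sum_comm
      have hout : ∑ v ∈ S, ∑ u ∈ Sᶜ, w v u = 0 := by
        refine Finset.sum_eq_zero fun v hv => Finset.sum_eq_zero fun u hu => ?_
        refine hzero v u fun he => (Finset.mem_compl.1 hu) (hclosed v u hv he)
      linarith
    have hcut' : ∀ v ∈ S, ∀ u ∈ Sᶜ, w u v = 0 := by
      intro v hv u hu
      have h1 := (Finset.sum_eq_zero_iff_of_nonneg
        (fun v _ => Finset.sum_nonneg fun u _ => hw0 u v)).1 hcut v hv
      exact (Finset.sum_eq_zero_iff_of_nonneg fun u _ => hw0 u v).1 h1 u hu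
    have hrS : ∀ x, Relation.ReflTransGen E x i → x ∈ S := by
      intro x hx
      induction hx using Relation.ReflTransGen.head_induction_on with
      | refl => exact (hmemS i).2 Relation.ReflTransGen.refl
      | head hxy _ ih =>
          by_contra hx
          have h0 := hcut' _ ih _ (Finset.mem_compl.2 hx)
          exact absurd h0 (ne_of_gt (hpos _ _ hxy))
    have hir : Relation.ReflTransGen E i r := (hmemS r).1 (hrS r (hr i))
    exact hir.trans (hr j)
  · intro hsc
    have key : ∀ x y : V, Relation.ReflTransGen E x y →
        ∃ F : V → V → ℝ, (∀ a b, 0 ≤ F a b) ∧ (∀ a b, ¬ E a b → F a b = 0) ∧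
          ∀ v, ∑ u, F v u - ∑ u, F u v
            = (if v = x then (1:ℝ) else 0) - (if v = y then 1 else 0) := by
      intro x y h
      induction h with
      | refl => exact ⟨0, by simp, by simp, by simp⟩
      | @tail b c hxb hbc ih =>
          obtain ⟨F, hF0, hFE, hFd⟩ := ih
          refine ⟨fun a d => F a d + (if a = b ∧ d = c then 1 else 0), ?_, ?_, ?_⟩
          · intro a d
            refine add_nonneg (hF0 a d) ?_
            split <;> norm_num
          · intro a d had
            show F a d + _ = 0
            rw [hFE a d had, if_neg, add_zero]
            rintro ⟨rfl, rfl⟩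
            exact had hbc
          · intro v
            have h1 : ∑ u, (if v = b ∧ u = c then (1:ℝ) else 0)
                = if v = b then 1 else 0 := by
              by_cases hv : v = b <;> simp [hv]
            have h2 : ∑ u, (if u = b ∧ v = c then (1:ℝ) else 0)
                = if v = c then 1 else 0 := by
              by_cases hv : v = c <;> simp [hv]
            have hd := hFd v
            rw [Finset.sum_add_distrib, Finset.sum_add_distrib, h1, h2]
            by_cases h3 : v = x <;> by_cases h4 : v = b <;> by_cases h5 : v = c <;>
              simp [h3, h4, h5] at hd ⊢ <;> linarith
    have hpair : ∀ a b : V, ∃ G : V → V → ℝ, (∀ i j, 0 ≤ G i j) ∧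
        (∀ i j, ¬ E i j → G i j = 0) ∧ (∀ v, ∑ u, G u v = ∑ u, G v u) ∧
        (E a b → 1 ≤ G a b) := by
      intro a b
      by_cases h : E a b
      · obtain ⟨F, hF0, hFE, hFd⟩ := key b a (hsc b a)
        refine ⟨fun i j => F i j + (if i = a ∧ j = b then 1 else 0), ?_, ?_, ?_, ?_⟩
        · intro i j
          refine add_nonneg (hF0 i j) ?_
          split <;> norm_num
        · intro i j hij
          show F i j + _ = 0
          rw [hFE i j hij, if_neg, add_zero]
          rintro ⟨rfl, rfl⟩
          exact hij h
        · intro v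
          have h1 : ∑ u, (if v = a ∧ u = b then (1:ℝ) else 0)
              = if v = a then 1 else 0 := by
            by_cases hv : v = a <;> simp [hv]
          have h2 : ∑ u, (if u = a ∧ v = b then (1:ℝ) else 0)
              = if v = b then 1 else 0 := by
            by_cases hv : v = b <;> simp [hv]
          have hd := hFd v
          rw [Finset.sum_add_distrib, Finset.sum_add_distrib, h1, h2]
          by_cases h3 : v = a <;> by_cases h4 : v = b <;>
            simp [h3, h4] at hd ⊢ <;> linarith
        · intro _
          have := hF0 a b
          simp only [and_self, if_pos rfl]
          simp
          linarith
      · exact ⟨0, by simp, by simp, by simp, fun he => absurd he h⟩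
    choose G hG0 hGE hGbal hGge using hpair
    refine ⟨fun i j => ∑ p : V × V, G p.1 p.2 i j, ?_, ?_, ?_⟩
    · intro i j hij
      have h1 : (1:ℝ) ≤ ∑ p : V × V, G p.1 p.2 i j := by
        calc (1:ℝ) ≤ G i j i j := hGge i j hij
        _ ≤ ∑ p : V × V, G p.1 p.2 i j := by
            refine Finset.single_le_sum (f := fun p : V × V => G p.1 p.2 i j)
              (fun p _ => hG0 p.1 p.2 i j) (Finset.mem_univ (i, j))
      linarith
    · intro i j hij
      exact Finset.sum_eq_zero fun p _ => hGE p.1 p.2 i j hij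
    · intro v
      show ∑ u : V, ∑ p : V × V, G p.1 p.2 u v = ∑ u : V, ∑ p : V × V, G p.1 p.2 v u
      calc ∑ u : V, ∑ p : V × V, G p.1 p.2 u v
          = ∑ p : V × V, ∑ u : V, G p.1 p.2 u v := Finset.sum_comm
        _ = ∑ p : V × V, ∑ u : V, G p.1 p.2 v u :=
            Finset.sum_congr rfl fun p _ => hGbal p.1 p.2 v
        _ = ∑ u : V, ∑ p : V × V, G p.1 p.2 v u := Finset.sum_comm
end
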